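/- For an F_q-subspace U ⊆ F_q^k, the trace-dual of the space of k×m matrices with column space contained in U is the space of k×m matrices with column space contained in U⊥: Mat(k,m,F_q)(U)⊥ = Mat(k,m,F_q)(U⊥). -/

import Mathlib

open Matrix Module

/-- `Mat(k,m,F_q)(U)⊥ = Mat(k,m,F_q)(U⊥)`: the trace-dual of the space of matrices with
column space in `U` is the space of matrices with column space in `U⊥`. -/
theorem trace_dual_of_colspace_code (F : Type*) [Field F] [Fintype F] (k m : ℕ)
    (U Uperp : Submodule F (Fin k → F))
    (hUperp : (Uperp : Set (Fin k → F)) = {x | ∀ y ∈ U, ∑ i, x i * y i = 0}) :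
    {N : Matrix (Fin k) (Fin m) F |
        ∀ M : Matrix (Fin k) (Fin m) F,
          Submodule.span F (Set.range Mᵀ) ≤ U → (M * Nᵀ).trace = 0} =
      {N : Matrix (Fin k) (Fin m) F | Submodule.span F (Set.range Nᵀ) ≤ Uperp} := by
  have htr : ∀ M N : Matrix (Fin k) (Fin m) F,
      (M * Nᵀ).trace = ∑ j, ∑ i, M i j * N i j := by
    intro M N
    rw [Matrix.trace]
    simp only [Matrix.diag, Matrix.mul_apply, Matrix.transpose_apply]
    rw [Finset.sum_comm]
  ext N
  simp only [Set.mem_setOf_eq]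
  constructor
  · intro h
    rw [Submodule.span_le]; refine Set.range_subset_iff.mpr ?_
    intro j
    rw [hUperp]
    intro y hy
    set M : Matrix (Fin k) (Fin m) F := fun i j' => if j' = j then y i else 0 with hM
    have hspan : Submodule.span F (Set.range Mᵀ) ≤ U := by
      rw [Submodule.span_le]; refine Set.range_subset_iff.mpr ?_
      intro j'
      by_cases hj : j' = j
      · have : Mᵀ j' = y := by funext i; show (if j' = j then y i else 0) = y i; simp [hj]
        rw [this]; exact hy
      · have : Mᵀ j' = 0 := by funext i; show (if j' = j then y i else 0) = 0; simp [hj]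
        rw [this]; exact U.zero_mem
    have h0 := h M hspan
    rw [htr] at h0
    rw [Finset.sum_eq_single j] at h0
    · have : ∑ i, M i j * N i j = ∑ i, Nᵀ j i * y i := by
        apply Finset.sum_congr rfl
        intro i _
        simp [hM, mul_comm]
      rwa [this] at h0
    · intro j' _ hj
      apply Finset.sum_eq_zero
      intro i _
      simp [hM, hj]
    · intro hj; exact absurd (Finset.mem_univ j) hj
  · intro h M hM
    rw [htr]
    apply Finset.sum_eq_zero
    intro j _
    have hNj : Nᵀ j ∈ Uperp := h (Submodule.subset_span ⟨j, rfl⟩)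
    rw [← SetLike.mem_coe, hUperp] at hNj
    have hMj : Mᵀ j ∈ U := hM (Submodule.subset_span ⟨j, rfl⟩)
    have := hNj (Mᵀ j) hMj
    simpa [mul_comm] using this
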